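/- Let p ≥ d. For a real p×d matrix A of rank d, for each i ∈ {1,…,d} let Sᵢ(A) denote the null space of A₋ᵢᵀ, and define the admissible projection set 𝒯(A) = ⋃ᵢ₌₁ᵈ { t ∈ Sᵢ(A) : aᵢᵀ t ≠ 0 }, where aᵢ is the i-th column of A. Let 𝒜̄ denote the set of full-column-rank matrices A ∈ ℝ^{p×d} for which there exists NO choice of vectors t⁽¹⁾, …, t⁽ᵖ⁾ ∈ 𝒯(A) such that the p×p matrix T₂, whose k-th row is the transpose of the entrywise (Hadamard) square t⁽ᵏ⁾ ⊙ t⁽ᵏ⁾, has rank p. Then 𝒜̄ has Lebesgue measure zero in ℝ^{p×d}. -/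

import Mathlib

open Matrix MeasureTheory MvPolynomial


lemma mvpoly_zero_set_null : ∀ (n : ℕ) (f : MvPolynomial (Fin n) ℝ), f ≠ 0 →
    volume {x : Fin n → ℝ | MvPolynomial.eval x f = 0} = 0 := by
  intro n
  induction n with
  | zero =>
    intro f hf
    convert measure_empty (μ := volume)
    ext x
    simp only [Set.mem_setOf_eq, Set.mem_empty_iff_false, iff_false]
    obtain ⟨c, rfl⟩ := C_surjective (Fin 0) f
    simpa using fun h => hf (by rw [h]; simp)
  | succ n ih =>
    intro f hf
    set q : Polynomial (MvPolynomial (Fin n) ℝ) := finSuccEquiv ℝ n f with hq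
    have hq0 : q ≠ 0 := by
      simp only [hq, ne_eq, EmbeddingLike.map_eq_zero_iff]
      exact hf
    have hlead : q.leadingCoeff ≠ 0 := Polynomial.leadingCoeff_ne_zero.mpr hq0
    set S : Set (Fin (n+1) → ℝ) := {x | MvPolynomial.eval x f = 0} with hS
    set S' : Set ((Fin n → ℝ) × ℝ) :=
      {y | Polynomial.eval y.2 (Polynomial.map (MvPolynomial.eval y.1) q) = 0} with hS'
    have hmeas : MeasurableSet S' := by
      have hc : Continuous fun y : (Fin n → ℝ) × ℝ =>
          MvPolynomial.eval (Fin.cons y.2 y.1) f := by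
        refine (MvPolynomial.continuous_eval f).comp (continuous_pi fun i => ?_)
        refine Fin.cases ?_ (fun j => ?_) i
        · simpa using continuous_snd
        · simpa [Function.comp_def] using (continuous_apply j).comp continuous_fst
      have he : S' = {y : (Fin n → ℝ) × ℝ | MvPolynomial.eval (Fin.cons y.2 y.1) f = 0} := by
        ext y; simp [hS', hq, eval_eq_eval_mv_eval']
      rw [he]
      exact (isClosed_eq hc continuous_const).measurableSet
    have hpre : S = (fun x : Fin (n+1) → ℝ =>
        Prod.swap ((MeasurableEquiv.piFinSuccAbove (fun _ => ℝ) 0) x)) ⁻¹' S' := by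
      ext x
      simp only [hS, hS', Set.mem_preimage, Set.mem_setOf_eq,
        MeasurableEquiv.piFinSuccAbove_apply, Fin.insertNthEquiv_zero, Prod.snd_swap,
        Prod.fst_swap, Fin.consEquiv_symm_apply]
      rw [← eval_eq_eval_mv_eval', Fin.cons_self_tail]
    have hMP : MeasurePreserving (fun x : Fin (n+1) → ℝ =>
        Prod.swap ((MeasurableEquiv.piFinSuccAbove (fun _ => ℝ) 0) x)) volume
        ((volume : Measure (Fin n → ℝ)).prod (volume : Measure ℝ)) := by
      exact (Measure.measurePreserving_swap).comp
        (volume_preserving_piFinSuccAbove (fun _ : Fin (n+1) => ℝ) 0)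
    rw [hpre, hMP.measure_preimage hmeas.nullMeasurableSet, Measure.measure_prod_null hmeas]
    -- a.e. section is finite
    have hN := ih q.leadingCoeff hlead
    rw [Filter.EventuallyEq, ae_iff]
    refine measure_mono_null ?_ hN
    intro s hs
    simp only [Set.mem_setOf_eq, Pi.zero_apply] at hs ⊢
    by_contra hzero
    apply hs
    have hps : Polynomial.map (MvPolynomial.eval s) q ≠ 0 := by
      intro h0
      apply hzero
      have h1 : (Polynomial.map (MvPolynomial.eval s) q).coeff q.natDegree = 0 := by
        rw [h0]; simp
      rw [Polynomial.coeff_map] at h1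
      rw [Polynomial.leadingCoeff]
      exact h1
    have : Prod.mk s ⁻¹' S' = {a : ℝ | Polynomial.IsRoot (Polynomial.map (MvPolynomial.eval s) q) a} := by
      ext a; simp [hS', Polynomial.IsRoot]
    rw [this]
    exact Set.Finite.measure_zero (Polynomial.finite_setOf_isRoot hps) volume

lemma mvpoly_zero_set_null' (ι : Type*) [Fintype ι] (f : MvPolynomial ι ℝ) (hf : f ≠ 0) :
    volume {x : ι → ℝ | MvPolynomial.eval x f = 0} = 0 := by
  classical
  set n := Fintype.card ι
  set e : ι ≃ Fin n := Fintype.equivFin ι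
  set g : MvPolynomial (Fin n) ℝ := rename e f with hg
  have hg0 : g ≠ 0 := fun h =>
    hf ((rename_injective e e.injective) (by simpa using h))
  have hmeas : MeasurableSet {y : Fin n → ℝ | MvPolynomial.eval y g = 0} :=
    (isClosed_eq (MvPolynomial.continuous_eval g) continuous_const).measurableSet
  have hpre : {x : ι → ℝ | MvPolynomial.eval x f = 0} =
      (MeasurableEquiv.piCongrLeft (fun _ : Fin n => ℝ) e) ⁻¹'
        {y : Fin n → ℝ | MvPolynomial.eval y g = 0} := by
    ext x
    simp only [Set.mem_preimage, Set.mem_setOf_eq, hg, eval_rename,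
      MeasurableEquiv.coe_piCongrLeft]
    have : (⇑(Equiv.piCongrLeft (fun _ : Fin n => ℝ) e) x) ∘ ⇑e = x := by
      funext i; simp [Equiv.piCongrLeft_apply_apply]
    rw [this]
  rw [hpre, (volume_measurePreserving_piCongrLeft (fun _ : Fin n => ℝ) e).measure_preimage
    hmeas.nullMeasurableSet]
  exact mvpoly_zero_set_null n g hg0

/-- the currying map is measure preserving -/
lemma curry_measurePreserving (d : ℕ) : ∀ p : ℕ,
    MeasurePreserving (fun (x : Fin p × Fin d → ℝ) (i : Fin p) (j : Fin d) => x (i, j))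
      volume volume := by
  intro p
  induction p with
  | zero =>
    have h1 := volume_preserving_pi_empty (fun _ : Fin 0 × Fin d => ℝ)
    have h2 := (volume_preserving_pi_empty (fun _ : Fin 0 => Fin d → ℝ)).symm
    have := h2.comp h1
    convert this using 1
  | succ p ih =>
    set E : (Fin d ⊕ (Fin p × Fin d)) ≃ (Fin (p+1) × Fin d) :=
      { toFun := Sum.elim (fun j => ((0 : Fin (p+1)), j)) (fun q => (q.1.succ, q.2))
        invFun := fun q => Fin.cases (Sum.inl q.2) (fun i => Sum.inr (i, q.2)) q.1
        left_inv := by rintro (j | ⟨i, j⟩) <;> simp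
        right_inv := by
          rintro ⟨i, j⟩
          induction i using Fin.cases <;> simp } with hE
    have m1 := (volume_measurePreserving_piCongrLeft (fun _ : Fin (p+1) × Fin d => ℝ) E).symm
    have m2 := volume_measurePreserving_sumPiEquivProdPi (fun _ : Fin d ⊕ (Fin p × Fin d) => ℝ)
    have m3 := (MeasurePreserving.id (volume : Measure (Fin d → ℝ))).prod ih
    have m4 := (volume_preserving_piFinSuccAbove (fun _ : Fin (p+1) => Fin d → ℝ) 0).symm
    have := m4.comp (m3.comp (m2.comp m1))
    convert this using 1
    case e'_4 => rfl
    funext x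
    funext i j
    show x (i, j) = (MeasurableEquiv.piFinSuccAbove (fun _ : Fin (p+1) => Fin d → ℝ) 0).symm
      (Prod.map id (fun (y : Fin p × Fin d → ℝ) (i : Fin p) (j : Fin d) => y (i, j))
        ((MeasurableEquiv.sumPiEquivProdPi (fun _ => ℝ))
          ((MeasurableEquiv.piCongrLeft (fun _ : Fin (p+1) × Fin d => ℝ) E).symm x))) i j
    induction i using Fin.cases with
    | zero =>
      simp [MeasurableEquiv.piFinSuccAbove, MeasurableEquiv.coe_sumPiEquivProdPi,
        Equiv.sumPiEquivProdPi, hE]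
      rfl
    | succ i =>
      simp [MeasurableEquiv.piFinSuccAbove, MeasurableEquiv.coe_sumPiEquivProdPi,
        Equiv.sumPiEquivProdPi, hE]
      rfl

section
variable {p d : ℕ}

lemma exists_good (hd : 0 < d) (hpd : d ≤ p) (M : Fin p → Fin d → ℝ)
    (B : Matrix (Fin d) (Fin d) ℝ) (hBdef : B = Matrix.of fun i j => M (Fin.castLE hpd i) j)
    (hB : B.det ≠ 0)
    (hsq : (Matrix.of fun i j => (B.adjugate i j)^2).det ≠ 0) :
    ∃ t : Fin p → Fin p → ℝ,
      (∀ k : Fin p, ∃ i : Fin d,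
        ((Matrix.of M).submatrix id
            (fun j : {j : Fin d // j ≠ i} => (j : Fin d)))ᵀ.mulVec (t k) = 0 ∧
        (fun r => Matrix.of M r i) ⬝ᵥ (t k) ≠ 0) ∧
      (Matrix.of fun k r : Fin p => (t k r) ^ 2).rank = p := by
  classical
  have hBu : IsUnit B.det := isUnit_iff_ne_zero.mpr hB
  set C : Matrix (Fin d) (Fin d) ℝ := B⁻¹ with hC
  have hCB : C * B = 1 := Matrix.nonsing_inv_mul B hBu
  set i0 : Fin d := ⟨0, hd⟩ with hi0
  set t : Fin p → Fin p → ℝ := fun k r =>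
    if hk : (k : ℕ) < d then
      (if hr : (r : ℕ) < d then C ⟨k, hk⟩ ⟨r, hr⟩ else 0)
    else
      (if hr : (r : ℕ) < d then C i0 ⟨r, hr⟩ - ∑ j, C j ⟨r, hr⟩ * M k j
       else if r = k then 1 else 0) with ht
  have hmem : ∀ r : Fin p, r ∈ Finset.univ.map (Fin.castLEEmb hpd) ↔ (r : ℕ) < d := by
    intro r
    simp only [Finset.mem_map, Finset.mem_univ, true_and, Fin.castLEEmb, Fin.castLE,
      Function.Embedding.coeFn_mk]
    constructor
    · rintro ⟨r', rfl⟩; exact r'.isLt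
    · intro h; exact ⟨⟨r, h⟩, rfl⟩
  -- key sum computations
  have key1 : ∀ (k : Fin p) (hk : (k : ℕ) < d) (j : Fin d),
      (∑ r : Fin p, M r j * t k r) = if (⟨k, hk⟩ : Fin d) = j then 1 else 0 := by
    intro k hk j
    have hz : ∀ r ∈ Finset.univ, r ∉ Finset.univ.map (Fin.castLEEmb hpd) →
        M r j * t k r = 0 := by
      intro r _ hr
      rw [hmem] at hr
      simp [ht, hk, hr]
    rw [← Finset.sum_subset (Finset.subset_univ _) hz, Finset.sum_map]
    have : ∀ r' : Fin d, M (Fin.castLEEmb hpd r') j * t k (Fin.castLEEmb hpd r')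
        = C ⟨k, hk⟩ r' * B r' j := by
      intro r'
      have hlt : ((Fin.castLEEmb hpd r' : Fin p) : ℕ) < d := r'.isLt
      have h1 : t k (Fin.castLEEmb hpd r') = C ⟨k, hk⟩ r' := by
        simp only [ht, hk, dif_pos, hlt]
        congr 1
      rw [h1, hBdef]
      simp only [Matrix.of_apply]
      rw [mul_comm]
      rfl
    rw [Finset.sum_congr rfl (fun r' _ => this r')]
    have := congrFun (congrFun hCB ⟨k, hk⟩) j
    simp only [Matrix.mul_apply, Matrix.one_apply] at this
    rw [this]
  have key2 : ∀ (k : Fin p) (hk : ¬ (k : ℕ) < d) (j : Fin d),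
      (∑ r : Fin p, M r j * t k r) = if i0 = j then 1 else 0 := by
    intro k hk j
    have hknot : k ∉ Finset.univ.map (Fin.castLEEmb hpd) := by rw [hmem]; exact hk
    have hz : ∀ r ∈ Finset.univ,
        r ∉ insert k (Finset.univ.map (Fin.castLEEmb hpd)) → M r j * t k r = 0 := by
      intro r _ hr
      simp only [Finset.mem_insert, not_or] at hr
      rw [hmem] at hr
      simp [ht, hk, hr.2, hr.1]
    rw [← Finset.sum_subset (Finset.subset_univ _) hz, Finset.sum_insert hknot,
      Finset.sum_map]
    have hterm : ∀ r' : Fin d, M (Fin.castLEEmb hpd r') j * t k (Fin.castLEEmb hpd r')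
        = (C i0 r' * B r' j - ∑ j', C j' r' * B r' j * M k j') := by
      intro r'
      have hlt : ((Fin.castLEEmb hpd r' : Fin p) : ℕ) < d := r'.isLt
      have h1 : t k (Fin.castLEEmb hpd r') = C i0 r' - ∑ j', C j' r' * M k j' := by
        simp only [ht, hk, dif_neg, dif_pos, hlt]
        congr 1
      have hMB : M (Fin.castLEEmb hpd r') j = B r' j := by rw [hBdef]; rfl
      rw [h1, hMB, mul_sub, Finset.mul_sum]
      congr 1
      · ring
      · exact Finset.sum_congr rfl fun j' _ => by ring
    rw [Finset.sum_congr rfl (fun r' _ => hterm r')]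
    rw [Finset.sum_sub_distrib, Finset.sum_comm]
    have hCB' : ∀ a b, (∑ r' : Fin d, C a r' * B r' b) = if a = b then 1 else 0 := by
      intro a b
      have := congrFun (congrFun hCB a) b
      simpa [Matrix.mul_apply, Matrix.one_apply] using this
    have h2 : (∑ j' : Fin d, ∑ r' : Fin d, C j' r' * B r' j * M k j')
        = M k j := by
      have : ∀ j' : Fin d, (∑ r' : Fin d, C j' r' * B r' j * M k j')
          = (if j' = j then 1 else 0) * M k j' := by
        intro j'
        rw [← Finset.sum_mul, hCB']
      rw [Finset.sum_congr rfl (fun j' _ => this j')]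
      simp
    rw [hCB' i0 j, h2]
    have htk : t k k = 1 := by simp [ht, hk]
    rw [htk]
    ring
  refine ⟨t, fun k => ?_, ?_⟩
  · -- membership in 𝒯(A)
    by_cases hk : (k : ℕ) < d
    · refine ⟨⟨k, hk⟩, ?_, ?_⟩
      · funext j
        have : (((Matrix.of M).submatrix id
            (fun j : {j : Fin d // j ≠ (⟨k, hk⟩ : Fin d)} => (j : Fin d)))ᵀ.mulVec (t k)) j
            = ∑ r : Fin p, M r (j : Fin d) * t k r := by
          simp [Matrix.mulVec, dotProduct, mul_comm]
        rw [this, key1 k hk]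
        simp [j.2.symm]
      · have : ((fun r => Matrix.of M r (⟨k, hk⟩ : Fin d)) ⬝ᵥ (t k))
            = ∑ r : Fin p, M r (⟨k, hk⟩ : Fin d) * t k r := by
          simp [dotProduct]
        rw [this, key1 k hk]
        simp
    · refine ⟨i0, ?_, ?_⟩
      · funext j
        have : (((Matrix.of M).submatrix id
            (fun j : {j : Fin d // j ≠ i0} => (j : Fin d)))ᵀ.mulVec (t k)) j
            = ∑ r : Fin p, M r (j : Fin d) * t k r := by
          simp [Matrix.mulVec, dotProduct, mul_comm]
        rw [this, key2 k hk]
        simp [j.2.symm]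
      · have : ((fun r => Matrix.of M r i0) ⬝ᵥ (t k))
            = ∑ r : Fin p, M r i0 * t k r := by
          simp [dotProduct]
        rw [this, key2 k hk]
        simp
  · -- rank condition
    have hcast : d + (p - d) = p := Nat.add_sub_cancel' hpd
    set e : Fin d ⊕ Fin (p - d) ≃ Fin p := finSumFinEquiv.trans (finCongr hcast) with he
    have he1 : ∀ i : Fin d, ((e (Sum.inl i) : Fin p) : ℕ) = (i : ℕ) := by
      intro i; simp [he]
    have he2 : ∀ i : Fin (p - d), ((e (Sum.inr i) : Fin p) : ℕ) = d + (i : ℕ) := by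
      intro i; simp [he]
    set X : Matrix (Fin d) (Fin d) ℝ := Matrix.of fun i j : Fin d => (C i j)^2 with hX
    set Y : Matrix (Fin (p - d)) (Fin d) ℝ :=
      Matrix.of fun i j => (t (e (Sum.inr i)) (e (Sum.inl j)))^2 with hY
    set T : Matrix (Fin p) (Fin p) ℝ := Matrix.of fun k r : Fin p => (t k r)^2 with hT
    have hTblocks : T.submatrix e e = Matrix.fromBlocks X 0 Y 1 := by
      ext ij rs
      cases ij with
      | inl i =>
        cases rs with
        | inl j =>
          have h1 : ((e (Sum.inl i) : Fin p) : ℕ) < d := by rw [he1]; exact i.isLt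
          have h2 : ((e (Sum.inl j) : Fin p) : ℕ) < d := by rw [he1]; exact j.isLt
          simp only [Matrix.submatrix_apply, Matrix.fromBlocks_apply₁₁, hT, Matrix.of_apply,
            hX]
          have : t (e (Sum.inl i)) (e (Sum.inl j)) = C i j := by
            simp only [ht]
            rw [dif_pos h1, dif_pos h2]
            exact congrArg₂ (fun a b => C a b) (Fin.ext (he1 i)) (Fin.ext (he1 j))
          rw [this]
        | inr j =>
          have h2 : ¬ ((e (Sum.inr j) : Fin p) : ℕ) < d := by
            rw [he2]; exact Nat.not_lt.mpr (Nat.le_add_right d j)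
          have h1 : ((e (Sum.inl i) : Fin p) : ℕ) < d := by rw [he1]; exact i.isLt
          simp only [Matrix.submatrix_apply, Matrix.fromBlocks_apply₁₂, hT, Matrix.of_apply,
            Matrix.zero_apply]
          have : t (e (Sum.inl i)) (e (Sum.inr j)) = 0 := by
            simp only [ht]
            rw [dif_pos h1, dif_neg h2]
          rw [this]
          norm_num
      | inr i =>
        cases rs with
        | inl j =>
          simp only [Matrix.submatrix_apply, Matrix.fromBlocks_apply₂₁, hT, Matrix.of_apply, hY]
        | inr j =>
          have h1 : ¬ ((e (Sum.inr i) : Fin p) : ℕ) < d := by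
            rw [he2]; exact Nat.not_lt.mpr (Nat.le_add_right d i)
          have h2 : ¬ ((e (Sum.inr j) : Fin p) : ℕ) < d := by
            rw [he2]; exact Nat.not_lt.mpr (Nat.le_add_right d j)
          simp only [Matrix.submatrix_apply, Matrix.fromBlocks_apply₂₂, hT, Matrix.of_apply]
          have : t (e (Sum.inr i)) (e (Sum.inr j)) =
              if e (Sum.inr j) = e (Sum.inr i) then 1 else 0 := by
            simp only [ht]
            rw [dif_neg h1, dif_neg h2]
          rw [this]
          have hiff : (e (Sum.inr j) = e (Sum.inr i)) ↔ i = j :=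
            ⟨fun h => (Sum.inr.inj (e.injective h)).symm, fun h => by rw [h]⟩
          rw [Matrix.one_apply]
          split_ifs with hc hd' hd'
          · norm_num
          · exact absurd (hiff.mp hc) hd'
          · exact absurd (hiff.mpr hd') hc
          · norm_num
    have hCij : ∀ i j, C i j = (B.det)⁻¹ * B.adjugate i j := by
      intro i j
      rw [hC, Matrix.inv_def, Ring.inverse_eq_inv']
      simp [Matrix.smul_apply]
    have hXsmul : X = (((B.det)⁻¹)^2) • (Matrix.of fun i j => (B.adjugate i j)^2) := by
      ext i j
      simp only [hX, Matrix.of_apply, Matrix.smul_apply, smul_eq_mul, hCij, mul_pow]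
    have hXdet : X.det ≠ 0 := by
      rw [hXsmul, Matrix.det_smul]
      exact mul_ne_zero (pow_ne_zero _ (pow_ne_zero _ (inv_ne_zero hB))) hsq
    have hdetT : T.det ≠ 0 := by
      rw [← Matrix.det_submatrix_equiv_self e, hTblocks, Matrix.det_fromBlocks_zero₁₂,
        Matrix.det_one, mul_one]
      exact hXdet
    have := Matrix.rank_of_isUnit T ((Matrix.isUnit_iff_isUnit_det T).mpr
      (isUnit_iff_ne_zero.mpr hdetT))
    simpa using this

end

section
variable {p d : ℕ}







lemma poly_eval (hpd : d ≤ p)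
    (G : MvPolynomial (Fin p × Fin d) ℝ)
    (hGdef : G = (Matrix.of fun i j : Fin d =>
        (MvPolynomial.X (Fin.castLE hpd i, j) : MvPolynomial (Fin p × Fin d) ℝ)).det *
      (Matrix.of fun i j : Fin d => (((Matrix.of fun i j : Fin d =>
        (MvPolynomial.X (Fin.castLE hpd i, j) : MvPolynomial (Fin p × Fin d) ℝ)).adjugate) i j)^2).det)
    (x : Fin p × Fin d → ℝ) :
    MvPolynomial.eval x G =
      (Matrix.of fun i j : Fin d => x (Fin.castLE hpd i, j)).det *
      (Matrix.of fun i j : Fin d =>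
        ((Matrix.of fun i j : Fin d => x (Fin.castLE hpd i, j)).adjugate i j)^2).det := by
  classical
  set φ : MvPolynomial (Fin p × Fin d) ℝ →+* ℝ := MvPolynomial.eval x with hφ
  set XB : Matrix (Fin d) (Fin d) (MvPolynomial (Fin p × Fin d) ℝ) :=
    Matrix.of fun i j : Fin d => MvPolynomial.X (Fin.castLE hpd i, j) with hXB
  set Bx : Matrix (Fin d) (Fin d) ℝ := Matrix.of fun i j : Fin d => x (Fin.castLE hpd i, j)
    with hBx
  have h1 : φ.mapMatrix XB = Bx := by
    ext i j
    simp [hXB, hBx, hφ, RingHom.mapMatrix_apply, Matrix.map_apply]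
  have h2 : φ.mapMatrix (Matrix.of fun i j : Fin d => (XB.adjugate i j)^2)
      = Matrix.of fun i j : Fin d => (Bx.adjugate i j)^2 := by
    ext i j
    simp only [RingHom.mapMatrix_apply, Matrix.map_apply, Matrix.of_apply, map_pow]
    rw [show φ (XB.adjugate i j) = (φ.mapMatrix XB.adjugate) i j from rfl,
      RingHom.map_adjugate, h1]
  rw [hGdef, _root_.map_mul, RingHom.map_det, RingHom.map_det, h1, h2]

lemma poly_ne_zero (hpd : d ≤ p)
    (G : MvPolynomial (Fin p × Fin d) ℝ)
    (hGdef : G = (Matrix.of fun i j : Fin d =>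
        (MvPolynomial.X (Fin.castLE hpd i, j) : MvPolynomial (Fin p × Fin d) ℝ)).det *
      (Matrix.of fun i j : Fin d => (((Matrix.of fun i j : Fin d =>
        (MvPolynomial.X (Fin.castLE hpd i, j) : MvPolynomial (Fin p × Fin d) ℝ)).adjugate) i j)^2).det) :
    G ≠ 0 := by
  classical
  intro h0
  set x0 : Fin p × Fin d → ℝ := fun q => if (q.1 : ℕ) = (q.2 : ℕ) then 1 else 0 with hx0
  have hBx : (Matrix.of fun i j : Fin d => x0 (Fin.castLE hpd i, j)) = (1 : Matrix (Fin d) (Fin d) ℝ) := by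
    ext i j
    simp only [Matrix.of_apply, hx0, Matrix.one_apply, Fin.coe_castLE]
    split_ifs with h1 h2 h2
    · rfl
    · exact absurd (Fin.ext h1) h2
    · exact absurd (congrArg Fin.val h2) h1
    · rfl
  have := poly_eval hpd G hGdef x0
  rw [h0, hBx] at this
  simp only [map_zero, Matrix.det_one, one_mul, Matrix.adjugate_one] at this
  have h1 : (Matrix.of fun i j : Fin d => ((1 : Matrix (Fin d) (Fin d) ℝ) i j)^2)
      = (1 : Matrix (Fin d) (Fin d) ℝ) := by
    ext i j
    simp only [Matrix.of_apply, Matrix.one_apply]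
    split_ifs <;> norm_num
  rw [h1, Matrix.det_one] at this
  exact zero_ne_one this

end

/-- The set of full-column-rank matrices `A ∈ ℝ^{p×d}` (`1 ≤ d ≤ p`),
identified with elements of `ℝ^{p·d}`, for which no choice of `p` projection vectors
`t⁽¹⁾, …, t⁽ᵖ⁾` from the admissible projection set
`𝒯(A) = ⋃ᵢ { t : A₋ᵢᵀ t = 0, aᵢᵀ t ≠ 0 }` makes the matrix of Hadamard squares
`T₂ = [t⁽ᵏ⁾ ⊙ t⁽ᵏ⁾]ₖ` have full rank `p`, is Lebesgue-null. -/
theorem bad_measurement_matrices_null (p d : ℕ) (hd : 0 < d) (hpd : d ≤ p) :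
    volume {M : Fin p → Fin d → ℝ |
      (Matrix.of M).rank = d ∧
      ¬ ∃ t : Fin p → Fin p → ℝ,
          (∀ k : Fin p, ∃ i : Fin d,
            ((Matrix.of M).submatrix id
                (fun j : {j : Fin d // j ≠ i} => (j : Fin d)))ᵀ.mulVec (t k) = 0 ∧
            (fun r => Matrix.of M r i) ⬝ᵥ (t k) ≠ 0) ∧
          (Matrix.of fun k r : Fin p => (t k r) ^ 2).rank = p} = 0 := by
  classical
  set G : MvPolynomial (Fin p × Fin d) ℝ :=
    (Matrix.of fun i j : Fin d =>
        (MvPolynomial.X (Fin.castLE hpd i, j) : MvPolynomial (Fin p × Fin d) ℝ)).det *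
      (Matrix.of fun i j : Fin d => (((Matrix.of fun i j : Fin d =>
        (MvPolynomial.X (Fin.castLE hpd i, j) : MvPolynomial (Fin p × Fin d) ℝ)).adjugate) i j)^2).det
    with hGdef
  have hG0 : G ≠ 0 := poly_ne_zero hpd G hGdef
  -- the bad set is contained in the zero locus of G
  have hsub : {M : Fin p → Fin d → ℝ |
      (Matrix.of M).rank = d ∧
      ¬ ∃ t : Fin p → Fin p → ℝ,
          (∀ k : Fin p, ∃ i : Fin d,
            ((Matrix.of M).submatrix id
                (fun j : {j : Fin d // j ≠ i} => (j : Fin d)))ᵀ.mulVec (t k) = 0 ∧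
            (fun r => Matrix.of M r i) ⬝ᵥ (t k) ≠ 0) ∧
          (Matrix.of fun k r : Fin p => (t k r) ^ 2).rank = p}
      ⊆ {M : Fin p → Fin d → ℝ |
          MvPolynomial.eval (fun q : Fin p × Fin d => M q.1 q.2) G = 0} := by
    intro M hM
    obtain ⟨-, hnex⟩ := hM
    by_contra hne
    apply hnex
    rw [Set.mem_setOf_eq, poly_eval hpd G hGdef] at hne
    have hB : (Matrix.of fun i j : Fin d => M (Fin.castLE hpd i) j).det ≠ 0 :=
      fun h => hne (by rw [show (Matrix.of fun i j : Fin d =>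
        (fun q : Fin p × Fin d => M q.1 q.2) (Fin.castLE hpd i, j)) =
        (Matrix.of fun i j : Fin d => M (Fin.castLE hpd i) j) from rfl, h, zero_mul])
    have hsq : (Matrix.of fun i j : Fin d =>
        ((Matrix.of fun i j : Fin d => M (Fin.castLE hpd i) j).adjugate i j)^2).det ≠ 0 :=
      fun h => hne (by rw [show (Matrix.of fun i j : Fin d =>
        (fun q : Fin p × Fin d => M q.1 q.2) (Fin.castLE hpd i, j)) =
        (Matrix.of fun i j : Fin d => M (Fin.castLE hpd i) j) from rfl, h, mul_zero])
    exact exists_good hd hpd M _ rfl hB hsq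
  refine le_antisymm ?_ (zero_le)
  refine le_trans (measure_mono hsub) ?_
  -- the zero locus in matrix space is null
  have hW : MeasurableSet {M : Fin p → Fin d → ℝ |
      MvPolynomial.eval (fun q : Fin p × Fin d => M q.1 q.2) G = 0} := by
    have hc : Continuous fun M : Fin p → Fin d → ℝ =>
        MvPolynomial.eval (fun q : Fin p × Fin d => M q.1 q.2) G := by
      refine (MvPolynomial.continuous_eval G).comp ?_
      exact continuous_pi fun q => (continuous_apply q.2).comp (continuous_apply q.1)
    exact (isClosed_eq hc continuous_const).measurableSet
  have hpre := (curry_measurePreserving d p).measure_preimage hW.nullMeasurableSet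
  have hZ : ((fun (x : Fin p × Fin d → ℝ) (i : Fin p) (j : Fin d) => x (i, j)) ⁻¹'
      {M : Fin p → Fin d → ℝ |
        MvPolynomial.eval (fun q : Fin p × Fin d => M q.1 q.2) G = 0})
      = {x : Fin p × Fin d → ℝ | MvPolynomial.eval x G = 0} := by
    ext x
    simp only [Set.mem_preimage, Set.mem_setOf_eq]
  rw [← hpre, hZ]
  exact le_of_eq (mvpoly_zero_set_null' (Fin p × Fin d) G hG0)
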